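/- Let q ∈ (0,1], let n be a nonnegative integer, let real coefficients b^n_{ijk} be given for all nonnegative i, j, k with i + j + k = n, and let γ^n(u,v) = Σ_{i+j+k=n} b^n_{ijk} B^n_{ijk}(u,v). Define recursively, for 0 ≤ r ≤ n and all nonnegative i, j, k with i + j + k = n − r: f^{(0)}_{ijk} = b^n_{ijk} and f^{(r)}_{ijk} = q^k u · f^{(r−1)}_{i+1,j,k} + q^k v · f^{(r−1)}_{i,j+1,k} + (1 − q^k u − q^k v) · f^{(r−1)}_{i,j,k+1}. Then γ^n(u,v) = f^{(n)}_{000} for all real u, v. -/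

import Mathlib

open Finset

/-- The q-integer [r] = 1 + q + ... + q^(r-1). -/
noncomputable def qInt (q : ℝ) (r : ℕ) : ℝ := ∑ s ∈ Finset.range r, q ^ s

/-- The q-factorial [r]!. -/
noncomputable def qFact (q : ℝ) : ℕ → ℝ
  | 0 => 1
  | r + 1 => qInt q (r + 1) * qFact q r

/-- The q-binomial coefficient [i choose j]_q (zero unless i ≥ j ≥ 0). -/
noncomputable def qBinom (q : ℝ) (i j : ℕ) : ℝ :=
  if j ≤ i then qFact q i / (qFact q j * qFact q (i - j)) else 0

/-- The q-binomial coefficient with integer indices, zero unless i ≥ j ≥ 0. -/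
noncomputable def qBinomZ (q : ℝ) (i j : ℤ) : ℝ :=
  if 0 ≤ j ∧ j ≤ i then qFact q i.toNat / (qFact q j.toNat * qFact q (i - j).toNat) else 0

/-- The triangular q-Bernstein polynomial B^n_{ijk}(u,v)
    (meaningful for i + j + k = n). -/
noncomputable def triB (q : ℝ) (n i j k : ℕ) (u v : ℝ) : ℝ :=
  qBinom q n k * (Nat.choose (i + j) i : ℝ) * u ^ i * v ^ j *
    ∏ s ∈ Finset.range k, (1 - q ^ s * u - q ^ s * v)

/-- The triangular q-Bernstein polynomial with integer indices; by convention it is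
    zero whenever any of the indices is negative. -/
noncomputable def triBZ (q : ℝ) (n : ℕ) (i j k : ℤ) (u v : ℝ) : ℝ :=
  if 0 ≤ i ∧ 0 ≤ j ∧ 0 ≤ k then triB q n i.toNat j.toNat k.toNat u v else 0

/-- The classical triangular Bernstein polynomial b^n_{ijk}(u,v). -/
noncomputable def triBern (n i j k : ℕ) (u v : ℝ) : ℝ :=
  (Nat.factorial n : ℝ) /
      ((Nat.factorial i : ℝ) * (Nat.factorial j : ℝ) * (Nat.factorial k : ℝ)) *
    u ^ i * v ^ j * (1 - u - v) ^ k

/-- The set of triples (i, j, k) of nonnegative integers with i + j + k = n. -/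
def simplex (n : ℕ) : Finset (ℕ × ℕ × ℕ) :=
  (Finset.range (n + 1) ×ˢ Finset.range (n + 1) ×ˢ Finset.range (n + 1)).filter
    (fun p => p.1 + p.2.1 + p.2.2 = n)

lemma qInt_pos {q : ℝ} (hq : 0 < q) (r : ℕ) (hr : 0 < r) : 0 < qInt q r := by
  unfold qInt
  apply Finset.sum_pos (fun s _ => pow_pos hq s)
  exact Finset.nonempty_range_iff.mpr hr.ne'

lemma qFact_pos {q : ℝ} (hq : 0 < q) (r : ℕ) : 0 < qFact q r := by
  induction r with
  | zero => norm_num [qFact]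
  | succ m ih => exact mul_pos (qInt_pos hq _ (Nat.succ_pos m)) ih

lemma qInt_split {q : ℝ} (m k : ℕ) (hk : k ≤ m + 1) :
    qInt q (m + 1) = qInt q k + q ^ k * qInt q (m + 1 - k) := by
  unfold qInt
  have h : m + 1 = k + (m + 1 - k) := by omega
  conv_lhs => rw [h, Finset.sum_range_add]
  rw [Finset.mul_sum]
  congr 1
  exact Finset.sum_congr rfl (fun s _ => by rw [pow_add])

/-- q-Pascal: [m+1, k] = [m, k-1] + q^k [m, k] for k ≥ 1. -/

lemma qPascal {q : ℝ} (hq : 0 < q) (m k : ℕ) :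
    qBinom q (m + 1) (k + 1) = qBinom q m k + q ^ (k + 1) * qBinom q m (k + 1) := by
  unfold qBinom
  rcases le_or_gt (k + 1) m with h | h
  · rw [if_pos (by omega), if_pos (by omega), if_pos h]
    have h1 : m + 1 - (k + 1) = m - k := by omega
    have h2 : m - k = (m - (k+1)) + 1 := by omega
    have e1 : qFact q (m+1) = qInt q (m+1) * qFact q m := rfl
    have e2 : qFact q (k+1) = qInt q (k+1) * qFact q k := rfl
    have e3 : qFact q (m - k) = qInt q (m - k) * qFact q (m - (k+1)) := by
      rw [h2]; rfl
    have hsplit : qInt q (m + 1) = qInt q (k+1) + q ^ (k+1) * qInt q (m - k) := by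
      have := qInt_split (q := q) m (k+1) (by omega)
      rwa [h1] at this
    rw [h1, e1, e2, e3, hsplit]
    have n1 := (qFact_pos hq m).ne'
    have n2 := (qFact_pos hq k).ne'
    have n3 := (qFact_pos hq (m - (k+1))).ne'
    have n4 := (qInt_pos hq (k+1) (Nat.succ_pos k)).ne'
    have n5 := (qInt_pos hq (m-k) (by omega)).ne'
    field_simp
  rcases eq_or_lt_of_le (Nat.succ_le_of_lt h) with h' | h'
  · -- k + 1 = m + 1, i.e. k = m
    have hk : k = m := by omega
    subst hk
    rw [if_pos le_rfl, if_pos le_rfl, if_neg (by omega)]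
    have e1 : qFact q (k+1) = qInt q (k+1) * qFact q k := rfl
    have hz : k + 1 - (k + 1) = 0 := by omega
    have hz2 : k - k = 0 := by omega
    rw [hz, hz2, e1]
    have n2 := (qFact_pos hq k).ne'
    have n4 := (qInt_pos hq (k+1) (Nat.succ_pos k)).ne'
    simp [qFact]
    field_simp
  · rw [if_neg (by omega), if_neg (by omega), if_neg (by omega)]
    ring

lemma qBinom_zero {q : ℝ} (hq : 0 < q) (i : ℕ) : qBinom q i 0 = 1 := by
  unfold qBinom
  rw [if_pos (Nat.zero_le i)]
  have := (qFact_pos hq i).ne'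
  simp [qFact]
  simp [this]

lemma triB_rec {q : ℝ} (hq : 0 < q) (u v : ℝ) (m i j k : ℕ) (h : i + j + k = m + 1) :
    triB q (m + 1) i j k u v =
      (if 1 ≤ i then q ^ k * u * triB q m (i - 1) j k u v else 0)
    + (if 1 ≤ j then q ^ k * v * triB q m i (j - 1) k u v else 0)
    + (if 1 ≤ k then (1 - q ^ (k - 1) * u - q ^ (k - 1) * v) * triB q m i j (k - 1) u v
        else 0) := by
  rcases i with _ | a <;> rcases j with _ | b <;> rcases k with _ | c
  · omega
  · -- i = 0, j = 0, k = c+1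
    rw [if_neg (by omega), if_neg (by omega), if_pos (by omega)]
    simp only [triB, Nat.add_sub_cancel, Finset.prod_range_succ]
    rw [qPascal hq m c]
    have hz : qBinom q m (c + 1) = 0 := by
      unfold qBinom; rw [if_neg (by omega)]
    rw [hz]
    ring
  · -- i = 0, j = b+1, k = 0
    rw [if_neg (by omega), if_pos (by omega), if_neg (by omega)]
    simp only [triB, Nat.add_sub_cancel, qBinom_zero hq]
    simp [Nat.choose_zero_right]
    ring
  · -- i = 0, j = b+1, k = c+1
    rw [if_neg (by omega), if_pos (by omega), if_pos (by omega)]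
    simp only [triB, Nat.add_sub_cancel, Finset.prod_range_succ]
    rw [qPascal hq m c]
    simp [Nat.choose_zero_right]
    ring
  · -- i = a+1, j = 0, k = 0
    rw [if_pos (by omega), if_neg (by omega), if_neg (by omega)]
    simp only [triB, Nat.add_sub_cancel, qBinom_zero hq]
    simp [Nat.choose_self]
    ring
  · -- i = a+1, j = 0, k = c+1
    rw [if_pos (by omega), if_neg (by omega), if_pos (by omega)]
    simp only [triB, Nat.add_sub_cancel, Finset.prod_range_succ]
    rw [qPascal hq m c]
    simp [Nat.choose_self]
    ring
  · -- i = a+1, j = b+1, k = 0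
    rw [if_pos (by omega), if_pos (by omega), if_neg (by omega)]
    simp only [triB, Nat.add_sub_cancel, qBinom_zero hq]
    rw [show a + 1 + (b + 1) = a + (b + 1) + 1 by omega,
        Nat.choose_succ_succ (a + (b + 1)) a,
        show a + 1 + b = a + (b + 1) by omega]
    push_cast
    ring
  · -- i = a+1, j = b+1, k = c+1
    rw [if_pos (by omega), if_pos (by omega), if_pos (by omega)]
    simp only [triB, Nat.add_sub_cancel, Finset.prod_range_succ]
    rw [qPascal hq m c,
        show a + 1 + (b + 1) = a + (b + 1) + 1 by omega,
        Nat.choose_succ_succ (a + (b + 1)) a,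
        show a + 1 + b = a + (b + 1) by omega]
    push_cast
    ring

lemma mem_simplex {n : ℕ} {p : ℕ × ℕ × ℕ} :
    p ∈ simplex n ↔ p.1 + p.2.1 + p.2.2 = n := by
  simp only [simplex, Finset.mem_filter, Finset.mem_product, Finset.mem_range]
  omega

lemma sum_shift1 {M : Type*} [AddCommMonoid M] (m : ℕ) (g : ℕ → ℕ → ℕ → M) :
    ∑ p ∈ simplex m, g (p.1 + 1) p.2.1 p.2.2
      = ∑ p ∈ simplex (m + 1), if 1 ≤ p.1 then g p.1 p.2.1 p.2.2 else 0 := by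
  rw [Finset.sum_ite, Finset.sum_const_zero, add_zero]
  apply Finset.sum_nbij' (i := fun p => (p.1 + 1, p.2.1, p.2.2))
    (j := fun p => (p.1 - 1, p.2.1, p.2.2))
  · rintro ⟨x, y, z⟩ hp
    simp [mem_simplex] at hp
    simp [mem_simplex]
    omega
  · rintro ⟨x, y, z⟩ hp
    simp [mem_simplex] at hp
    simp [mem_simplex]
    omega
  · rintro ⟨x, y, z⟩ hp; simp
  · rintro ⟨x, y, z⟩ hp
    simp [mem_simplex] at hp
    have hx : x - 1 + 1 = x := by omega
    simp [hx]
  · rintro ⟨x, y, z⟩ hp; rfl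

lemma sum_shift2 {M : Type*} [AddCommMonoid M] (m : ℕ) (g : ℕ → ℕ → ℕ → M) :
    ∑ p ∈ simplex m, g p.1 (p.2.1 + 1) p.2.2
      = ∑ p ∈ simplex (m + 1), if 1 ≤ p.2.1 then g p.1 p.2.1 p.2.2 else 0 := by
  rw [Finset.sum_ite, Finset.sum_const_zero, add_zero]
  apply Finset.sum_nbij' (i := fun p => (p.1, p.2.1 + 1, p.2.2))
    (j := fun p => (p.1, p.2.1 - 1, p.2.2))
  · rintro ⟨x, y, z⟩ hp
    simp [mem_simplex] at hp
    simp [mem_simplex]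
    omega
  · rintro ⟨x, y, z⟩ hp
    simp [mem_simplex] at hp
    simp [mem_simplex]
    omega
  · rintro ⟨x, y, z⟩ hp; simp
  · rintro ⟨x, y, z⟩ hp
    simp [mem_simplex] at hp
    have hy : y - 1 + 1 = y := by omega
    simp [hy]
  · rintro ⟨x, y, z⟩ hp; rfl

lemma sum_shift3 {M : Type*} [AddCommMonoid M] (m : ℕ) (g : ℕ → ℕ → ℕ → M) :
    ∑ p ∈ simplex m, g p.1 p.2.1 (p.2.2 + 1)
      = ∑ p ∈ simplex (m + 1), if 1 ≤ p.2.2 then g p.1 p.2.1 p.2.2 else 0 := by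
  rw [Finset.sum_ite, Finset.sum_const_zero, add_zero]
  apply Finset.sum_nbij' (i := fun p => (p.1, p.2.1, p.2.2 + 1))
    (j := fun p => (p.1, p.2.1, p.2.2 - 1))
  · rintro ⟨x, y, z⟩ hp
    simp [mem_simplex] at hp
    simp [mem_simplex]
    omega
  · rintro ⟨x, y, z⟩ hp
    simp [mem_simplex] at hp
    simp [mem_simplex]
    omega
  · rintro ⟨x, y, z⟩ hp; simp
  · rintro ⟨x, y, z⟩ hp
    simp [mem_simplex] at hp
    have hz : z - 1 + 1 = z := by omega
    simp [hz]
  · rintro ⟨x, y, z⟩ hp; rfl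

/-- the de Casteljau type algorithm evaluates the q-Bézier polynomial. -/
theorem stmt2 (q : ℝ) (hq0 : 0 < q) (hq1 : q ≤ 1) (n : ℕ)
    (b : ℕ → ℕ → ℕ → ℝ) (u v : ℝ)
    (f : ℕ → ℕ → ℕ → ℕ → ℝ)
    (hf0 : ∀ i j k, i + j + k = n → f 0 i j k = b i j k)
    (hfr : ∀ r i j k, r < n → i + j + k = n - (r + 1) →
      f (r + 1) i j k =
        q ^ k * u * f r (i + 1) j k + q ^ k * v * f r i (j + 1) k +
          (1 - q ^ k * u - q ^ k * v) * f r i j (k + 1)) :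
    ∑ p ∈ simplex n, b p.1 p.2.1 p.2.2 * triB q n p.1 p.2.1 p.2.2 u v = f n 0 0 0 := by
  have key : ∀ r, r ≤ n →
      ∑ p ∈ simplex n, b p.1 p.2.1 p.2.2 * triB q n p.1 p.2.1 p.2.2 u v
        = ∑ p ∈ simplex (n - r), f r p.1 p.2.1 p.2.2 * triB q (n - r) p.1 p.2.1 p.2.2 u v := by
    intro r
    induction r with
    | zero =>
      intro _
      simp only [Nat.sub_zero]
      exact Finset.sum_congr rfl (fun p hp => by rw [hf0 _ _ _ (mem_simplex.mp hp)])
    | succ r ih =>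
      intro hr
      have hrn : r < n := hr
      rw [ih (le_of_lt hrn)]
      set m := n - (r + 1) with hm
      have hnr : n - r = m + 1 := by omega
      rw [hnr]
      symm
      calc ∑ p ∈ simplex m, f (r + 1) p.1 p.2.1 p.2.2 * triB q m p.1 p.2.1 p.2.2 u v
          = ∑ p ∈ simplex m,
              (q ^ p.2.2 * u * f r (p.1 + 1) p.2.1 p.2.2 * triB q m p.1 p.2.1 p.2.2 u v
              + q ^ p.2.2 * v * f r p.1 (p.2.1 + 1) p.2.2 * triB q m p.1 p.2.1 p.2.2 u v
              + (1 - q ^ p.2.2 * u - q ^ p.2.2 * v) * f r p.1 p.2.1 (p.2.2 + 1)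
                  * triB q m p.1 p.2.1 p.2.2 u v) := by
            refine Finset.sum_congr rfl (fun p hp => ?_)
            rw [hfr r p.1 p.2.1 p.2.2 hrn (mem_simplex.mp hp)]
            ring
        _ = (∑ p ∈ simplex m,
              q ^ p.2.2 * u * f r (p.1 + 1) p.2.1 p.2.2 * triB q m p.1 p.2.1 p.2.2 u v)
          + (∑ p ∈ simplex m,
              q ^ p.2.2 * v * f r p.1 (p.2.1 + 1) p.2.2 * triB q m p.1 p.2.1 p.2.2 u v)
          + (∑ p ∈ simplex m,
              (1 - q ^ p.2.2 * u - q ^ p.2.2 * v) * f r p.1 p.2.1 (p.2.2 + 1)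
                  * triB q m p.1 p.2.1 p.2.2 u v) := by
            rw [Finset.sum_add_distrib, Finset.sum_add_distrib]
        _ = (∑ p ∈ simplex (m + 1), if 1 ≤ p.1 then
                q ^ p.2.2 * u * f r p.1 p.2.1 p.2.2 * triB q m (p.1 - 1) p.2.1 p.2.2 u v else 0)
          + (∑ p ∈ simplex (m + 1), if 1 ≤ p.2.1 then
                q ^ p.2.2 * v * f r p.1 p.2.1 p.2.2 * triB q m p.1 (p.2.1 - 1) p.2.2 u v else 0)
          + (∑ p ∈ simplex (m + 1), if 1 ≤ p.2.2 then
                (1 - q ^ (p.2.2 - 1) * u - q ^ (p.2.2 - 1) * v) * f r p.1 p.2.1 p.2.2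
                  * triB q m p.1 p.2.1 (p.2.2 - 1) u v else 0) := by
            have h1 := sum_shift1 m (fun i j k =>
              q ^ k * u * f r i j k * triB q m (i - 1) j k u v)
            have h2 := sum_shift2 m (fun i j k =>
              q ^ k * v * f r i j k * triB q m i (j - 1) k u v)
            have h3 := sum_shift3 m (fun i j k =>
              (1 - q ^ (k - 1) * u - q ^ (k - 1) * v) * f r i j k * triB q m i j (k - 1) u v)
            simp only [Nat.add_sub_cancel] at h1 h2 h3
            rw [h1, h2, h3]
        _ = ∑ p ∈ simplex (m + 1),
              ((if 1 ≤ p.1 then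
                q ^ p.2.2 * u * f r p.1 p.2.1 p.2.2 * triB q m (p.1 - 1) p.2.1 p.2.2 u v else 0)
              + (if 1 ≤ p.2.1 then
                q ^ p.2.2 * v * f r p.1 p.2.1 p.2.2 * triB q m p.1 (p.2.1 - 1) p.2.2 u v else 0)
              + (if 1 ≤ p.2.2 then
                (1 - q ^ (p.2.2 - 1) * u - q ^ (p.2.2 - 1) * v) * f r p.1 p.2.1 p.2.2
                  * triB q m p.1 p.2.1 (p.2.2 - 1) u v else 0)) := by
            rw [Finset.sum_add_distrib, Finset.sum_add_distrib]
        _ = ∑ p ∈ simplex (m + 1),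
              f r p.1 p.2.1 p.2.2 * triB q (m + 1) p.1 p.2.1 p.2.2 u v := by
            refine Finset.sum_congr rfl (fun p hp => ?_)
            rw [triB_rec hq0 u v m p.1 p.2.1 p.2.2 (mem_simplex.mp hp)]
            split_ifs <;> ring
  have h0 : simplex 0 = {((0 : ℕ), (0 : ℕ), (0 : ℕ))} := by decide
  have := key n le_rfl
  rw [Nat.sub_self, h0] at this
  rw [this]
  have hB : triB q 0 0 0 0 u v = 1 := by
    simp [triB, qBinom, qFact]
  simp [hB]
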